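/- If x_1, ..., x_n are unit vectors in R^d with n > d + 1, then min_{i≠j} ||x_i - x_j|| ≤ sqrt(2); equivalently, there exist i ≠ j with ⟨x_i, x_j⟩ ≥ 0. -/

import Mathlib

open Finset

theorem rankin_orthoplex_bound (d n : ℕ) (hn : d + 1 < n)
    (x : Fin n → EuclideanSpace ℝ (Fin d)) (hx : ∀ i, ‖x i‖ = 1) :
    ∃ i j : Fin n, i ≠ j ∧ ‖x i - x j‖ ≤ Real.sqrt 2 ∧
      (0 : ℝ) ≤ inner ℝ (x i) (x j) := by
  by_contra h
  have key : ∀ i j : Fin n, i ≠ j → (inner ℝ (x i) (x j) : ℝ) < 0 := by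
    intro i j hij
    by_contra hle
    push_neg at hle
    apply h
    refine ⟨i, j, hij, ?_, hle⟩
    have hsq : ‖x i - x j‖ ^ 2 = 2 - 2 * inner ℝ (x i) (x j) := by
      rw [norm_sub_sq_real, hx i, hx j]; ring
    have h2 : ‖x i - x j‖ ^ 2 ≤ 2 := by linarith
    calc ‖x i - x j‖ = Real.sqrt (‖x i - x j‖ ^ 2) :=
          (Real.sqrt_sq (norm_nonneg _)).symm
      _ ≤ Real.sqrt 2 := Real.sqrt_le_sqrt h2
  obtain ⟨k, rfl⟩ : ∃ k, n = k + 1 := ⟨n - 1, by omega⟩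
  set v : Fin k → EuclideanSpace ℝ (Fin d) := fun i => x i.castSucc with hv
  have hdep : ¬ LinearIndependent ℝ v := by
    intro hli
    have hc := hli.fintype_card_le_finrank
    simp [finrank_euclideanSpace_fin] at hc
    omega
  obtain ⟨g, hsum, i₀, hi₀⟩ := Fintype.not_linearIndependent_iff.mp hdep
  have main : ∀ g : Fin k → ℝ, (∑ i, g i • v i) = 0 → ∀ i₀, 0 < g i₀ → False := by
    intro g hsum i₀ hi₀
    set P : Finset (Fin k) := univ.filter (fun i => 0 < g i) with hP
    set N : Finset (Fin k) := univ.filter (fun i => ¬ 0 < g i) with hN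
    set y : EuclideanSpace ℝ (Fin d) := ∑ i ∈ P, g i • v i with hy
    have hPN : y + ∑ i ∈ N, g i • v i = 0 := by
      rw [hy, hP, hN, Finset.sum_filter_add_sum_filter_not]; exact hsum
    have hyN : y = ∑ i ∈ N, (-(g i)) • v i := by
      have h1 : y = -∑ i ∈ N, g i • v i := by
        have := eq_neg_of_add_eq_zero_left hPN
        exact this
      rw [h1, ← Finset.sum_neg_distrib]
      exact Finset.sum_congr rfl fun i _ => (neg_smul _ _).symm
    have hi₀P : i₀ ∈ P := by simp [hP, hi₀]
    have h1 : (inner ℝ y (x (Fin.last k)) : ℝ) < 0 := by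
      rw [hy, sum_inner]
      apply Finset.sum_neg
      · intro i hiP
        rw [real_inner_smul_left]
        have hgi : 0 < g i := by
          simpa [hP] using hiP
        have hin : (inner ℝ (v i) (x (Fin.last k)) : ℝ) < 0 :=
          key _ _ (Fin.castSucc_lt_last i).ne
        exact mul_neg_of_pos_of_neg hgi hin
      · exact ⟨i₀, hi₀P⟩
    have h2 : (inner ℝ y y : ℝ) ≤ 0 := by
      nth_rewrite 2 [hyN]
      nth_rewrite 1 [hy]
      rw [sum_inner]
      apply Finset.sum_nonpos
      intro i hiP
      rw [inner_sum]
      apply Finset.sum_nonpos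
      intro j hjN
      rw [real_inner_smul_left, real_inner_smul_right]
      have hgi : 0 < g i := by simpa [hP] using hiP
      have hgj : g j ≤ 0 := by
        have := by simpa [hN] using hjN
        linarith
      have hij : i ≠ j := by
        intro he
        subst he
        have : ¬ 0 < g i := by simpa [hN] using hjN
        exact this hgi
      have hin : (inner ℝ (v i) (v j) : ℝ) < 0 :=
        key _ _ (fun he => hij (Fin.castSucc_injective _ he))
      exact mul_nonpos_of_nonneg_of_nonpos hgi.le (mul_nonpos_of_nonneg_of_nonpos (by linarith) hin.le)
    have hy0 : y = 0 := real_inner_self_nonpos.mp h2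
    rw [hy0] at h1
    simp at h1
  rcases lt_or_gt_of_ne hi₀ with hneg | hpos
  · refine main (fun i => -(g i)) ?_ i₀ (by simpa using hneg)
    show ∑ i, (-(g i)) • v i = 0
    simp only [neg_smul]
    rw [Finset.sum_neg_distrib, hsum, neg_zero]
  · exact main g hsum i₀ hpos
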